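/- Let x₁, x₂ be linearly independent linear forms and y₁, y₂ linearly independent linear forms in ℂ[X,Y,Z]. Then the set of quadruples (v₁, v₂, u₁, u₂) of cubic forms satisfying vᵢ·xⱼ + yᵢ·uⱼ = 0 for all i, j ∈ {1,2} is exactly {(y₁·w, y₂·w, −x₁·w, −x₂·w) : w a quadratic form}; in particular it is a ℂ-vector space of dimension 6. (This is the kernel computation underlying the fibre ℙ²⁵ in the description of the codimension-8 stratum X₆ of M_{P²}(6,3) as a bundle over ℙ² × ℙ².) -/

import Mathlib

open MvPolynomial

abbrev R3 := MvPolynomial (Fin 3) ℂ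

/-- The set of quadruples `(v₁,v₂,u₁,u₂)` of cubic forms satisfying
`vᵢ·xⱼ + yᵢ·uⱼ = 0` for all `i,j ∈ {1,2}`. -/
def SolSet (x₁ x₂ y₁ y₂ : R3) : Set (R3 × R3 × R3 × R3) :=
  {p | p.1.IsHomogeneous 3 ∧ p.2.1.IsHomogeneous 3 ∧ p.2.2.1.IsHomogeneous 3 ∧
    p.2.2.2.IsHomogeneous 3 ∧
    p.1 * x₁ + y₁ * p.2.2.1 = 0 ∧ p.1 * x₂ + y₁ * p.2.2.2 = 0 ∧
    p.2.1 * x₁ + y₂ * p.2.2.1 = 0 ∧ p.2.1 * x₂ + y₂ * p.2.2.2 = 0}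

/- ### Auxiliary lemmas -/

lemma eq_C_of_homog0 {σ K : Type*} [CommSemiring K] {a : MvPolynomial σ K}
    (h : a.IsHomogeneous 0) : a = C (coeff 0 a) := by
  have h1 := homogeneousComponent_of_mem (m := 0) (n := 0) (mem_homogeneousSubmodule 0 a |>.mpr h)
  rw [if_pos rfl] at h1
  rw [homogeneousComponent_zero] at h1
  exact h1.symm

lemma isHomogeneous_of_mul_left {σ K : Type*} [Field K] {a b : MvPolynomial σ K} {m n : ℕ}
    (ha : a.IsHomogeneous m) (ha0 : a ≠ 0) (hab : (a * b).IsHomogeneous (m + n)) :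
    b.IsHomogeneous n := by
  have key : ∀ d : ℕ, d ≠ n → a * homogeneousComponent d b = 0 := by
    intro d hd
    have h1 : a * b = ∑ i ∈ Finset.range (b.totalDegree + 1),
        a * homogeneousComponent i b := by
      rw [← Finset.mul_sum, sum_homogeneousComponent]
    have h2 : homogeneousComponent (m + d) (a * b) = a * homogeneousComponent d b := by
      rw [h1, map_sum]
      have : ∀ i ∈ Finset.range (b.totalDegree + 1),
          homogeneousComponent (m + d) (a * homogeneousComponent i b)
            = if i = d then a * homogeneousComponent i b else 0 := by
        intro i _
        have hmem : a * homogeneousComponent i b ∈ homogeneousSubmodule σ K (m + i) :=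
          (mem_homogeneousSubmodule _ _).mpr (ha.mul (homogeneousComponent_isHomogeneous i b))
        rw [homogeneousComponent_of_mem hmem]
        by_cases hid : i = d
        · subst hid; simp
        · rw [if_neg (by omega), if_neg hid]
      rw [Finset.sum_congr rfl this]
      by_cases hdr : d ∈ Finset.range (b.totalDegree + 1)
      · rw [Finset.sum_ite_eq' _ d, if_pos hdr]
      · rw [Finset.sum_ite_eq' _ d, if_neg hdr]
        have : homogeneousComponent d b = 0 := by
          apply homogeneousComponent_eq_zero
          simpa using Nat.lt_of_not_le (fun h => hdr (Finset.mem_range.mpr (by omega)))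
        rw [this, mul_zero]
    have h3 : homogeneousComponent (m + d) (a * b) = 0 := by
      rw [homogeneousComponent_of_mem ((mem_homogeneousSubmodule _ _).mpr hab)]
      rw [if_neg (by omega)]
    rw [← h2, h3]
  have hb : b = ∑ i ∈ Finset.range (b.totalDegree + 1), homogeneousComponent i b :=
    (sum_homogeneousComponent b).symm
  rw [hb]
  apply IsHomogeneous.sum
  intro i _
  by_cases hi : i = n
  · subst hi; exact homogeneousComponent_isHomogeneous i b
  · have := key i hi
    have h0 : homogeneousComponent i b = 0 := by
      rcases mul_eq_zero.mp this with h | h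
      · exact absurd h ha0
      · exact h
    rw [h0]; exact isHomogeneous_zero _ _ _

lemma prime_linear_aux {y : MvPolynomial (Fin 3) ℂ} (hy : y.IsHomogeneous 1)
    (hc : coeff (Finsupp.single 0 1) y ≠ 0) : Prime y := by
  set e := finSuccEquiv ℂ 2 with he
  set p := e y with hp
  have hy0 : y ≠ 0 := fun h => hc (by simp [h])
  have hcons : (Finsupp.cons 1 (0 : Fin 2 →₀ ℕ)) = Finsupp.single (0 : Fin 3) 1 := by
    ext i
    refine Fin.cases ?_ (fun j => ?_) i <;>
      simp [Finsupp.single_apply, eq_comm, Fin.succ_ne_zero]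
  have hc1 : coeff 0 (p.coeff 1) = coeff (Finsupp.single 0 1) y := by
    rw [hp, finSuccEquiv_coeff_coeff, hcons]
  have hp1hom : (p.coeff 1).IsHomogeneous 0 :=
    hy.finSuccEquiv_coeff_isHomogeneous 1 0 rfl
  have hp1 : p.coeff 1 = C (coeff (Finsupp.single 0 1) y) := by
    rw [eq_C_of_homog0 hp1hom, hc1]
  have hp1ne : p.coeff 1 ≠ 0 := by
    rw [hp1]; simpa using hc
  have hdeg : p.natDegree ≤ 1 := by
    apply Polynomial.natDegree_le_iff_coeff_eq_zero.mpr
    intro i hi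
    by_contra hne
    have := totalDegree_coeff_finSuccEquiv_add_le y i (by rwa [← hp])
    rw [hy.totalDegree hy0] at this
    omega
  have hdeg1 : p.natDegree = 1 :=
    le_antisymm hdeg (Polynomial.le_natDegree_of_ne_zero hp1ne)
  have hdegd : p.degree = 1 :=
    Polynomial.degree_eq_of_le_of_coeff_ne_zero (n := 1)
      (by simpa [Polynomial.degree_le_iff_coeff_zero] using
        fun i (hi : (1:ℕ) < i) => Polynomial.coeff_eq_zero_of_natDegree_lt (by omega))
      (by simpa using hp1ne)
  set c := coeff (Finsupp.single (0 : Fin 3) 1) y with hcdef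
  have hCu : IsUnit (Polynomial.C (MvPolynomial.C (σ := Fin 2) c⁻¹)) :=
    ((hc.isUnit.inv.map (MvPolynomial.C (σ := Fin 2))).map Polynomial.C)
  set q := Polynomial.C (MvPolynomial.C (σ := Fin 2) c⁻¹) * p with hq
  have hlead : p.leadingCoeff = MvPolynomial.C c := by
    rw [Polynomial.leadingCoeff, hdeg1, hp1]
  have hCne : (MvPolynomial.C (σ := Fin 2) c⁻¹) ≠ 0 := by
    simpa using inv_ne_zero hc
  have hqdeg : q.degree = 1 := by
    rw [hq, Polynomial.degree_mul, Polynomial.degree_C hCne, hdegd]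
    rfl
  have hqmonic : q.Monic := by
    rw [Polynomial.Monic, hq, Polynomial.leadingCoeff_mul, Polynomial.leadingCoeff_C, hlead,
      ← map_mul, inv_mul_cancel₀ hc, map_one]
  have hqprime : Prime q := hqmonic.prime_of_degree_eq_one hqdeg
  have hassoc : Associated q p := associated_unit_mul_left p _ hCu
  have hpprime : Prime p := hassoc.prime hqprime
  rw [← MulEquiv.prime_iff (finSuccEquiv ℂ 2).toRingEquiv.toMulEquiv]
  exact hpprime

lemma fin3_eq (d : Fin 3 →₀ ℕ) :
    d = Finsupp.single 0 (d 0) + Finsupp.single 1 (d 1) + Finsupp.single 2 (d 2) := by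
  ext j
  fin_cases j <;> simp [Finsupp.single_apply]

noncomputable def e6 : Fin 6 → (Fin 3 →₀ ℕ)
  | 0 => Finsupp.single 0 2
  | 1 => Finsupp.single 1 2
  | 2 => Finsupp.single 2 2
  | 3 => Finsupp.single 0 1 + Finsupp.single 1 1
  | 4 => Finsupp.single 0 1 + Finsupp.single 2 1
  | 5 => Finsupp.single 1 1 + Finsupp.single 2 1

lemma fin3_deg1 {d : Fin 3 →₀ ℕ} (h : d 0 + d 1 + d 2 = 1) :
    ∃ i : Fin 3, d = Finsupp.single i 1 := by
  have key := fin3_eq d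
  have h0 : d 0 ≤ 1 := by omega
  have h1 : d 1 ≤ 1 := by omega
  have h2 : d 2 ≤ 1 := by omega
  interval_cases hd0 : d 0 <;> interval_cases hd1 : d 1 <;> interval_cases hd2 : d 2 <;>
    try omega
  · exact ⟨2, key.trans (by simp)⟩
  · exact ⟨1, key.trans (by simp)⟩
  · exact ⟨0, key.trans (by simp)⟩

lemma fin3_deg2 {d : Fin 3 →₀ ℕ} (h : d 0 + d 1 + d 2 = 2) :
    ∃ k : Fin 6, d = e6 k := by
  have key := fin3_eq d
  have h0 : d 0 ≤ 2 := by omega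
  have h1 : d 1 ≤ 2 := by omega
  have h2 : d 2 ≤ 2 := by omega
  interval_cases hd0 : d 0 <;> interval_cases hd1 : d 1 <;> interval_cases hd2 : d 2 <;>
    try omega
  · exact ⟨2, key.trans (by simp [e6])⟩
  · exact ⟨5, key.trans (by simp [e6])⟩
  · exact ⟨1, key.trans (by simp [e6])⟩
  · exact ⟨4, key.trans (by simp [e6])⟩
  · exact ⟨3, key.trans (by simp [e6])⟩
  · exact ⟨0, key.trans (by simp [e6])⟩

noncomputable def v3 : (Fin 3 →₀ ℕ) → ℕ := fun d => 9 * d 0 + 3 * d 1 + d 2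

lemma e6_inj : Function.Injective e6 := by
  intro a b hab
  have hv := congrArg v3 hab
  clear hab
  fin_cases a <;> fin_cases b <;>
    first
      | rfl
      | (simp only [e6, v3, Finsupp.single_apply, Finsupp.add_apply] at hv; simp at hv)

lemma fin3_degree (d : Fin 3 →₀ ℕ) : d.degree = d 0 + d 1 + d 2 := by
  rw [Finsupp.degree_eq_weight_one]
  simp [Finsupp.weight_apply, Finsupp.sum_fintype, Fin.sum_univ_three]

lemma homog_deg_sum {n : ℕ} {y : R3} (hy : y.IsHomogeneous n)
    {d : Fin 3 →₀ ℕ} (hd : coeff d y ≠ 0) : d 0 + d 1 + d 2 = n := by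
  have h1 := hy hd
  simp [Finsupp.weight_apply, Finsupp.sum_fintype, Fin.sum_univ_three] at h1
  exact h1

lemma prime_linear {y : R3} (hy : y.IsHomogeneous 1) (hy0 : y ≠ 0) :
    Prime y := by
  obtain ⟨d, hd⟩ : ∃ d, coeff d y ≠ 0 := by
    by_contra h
    push_neg at h
    exact hy0 (MvPolynomial.ext _ _ (by simpa using h))
  obtain ⟨i, rfl⟩ := fin3_deg1 (homog_deg_sum hy hd)
  set τ := Equiv.swap (0 : Fin 3) i with hτ
  have h1 : coeff (Finsupp.single 0 1) (rename τ y) ≠ 0 := by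
    have := coeff_rename_mapDomain τ τ.injective y (Finsupp.single i 1)
    rw [Finsupp.mapDomain_single, Equiv.swap_apply_right] at this
    rwa [this]
  have h2 : (rename τ y).IsHomogeneous 1 := hy.rename_isHomogeneous
  have hprime : Prime (rename τ y) := prime_linear_aux h2 h1
  have heq : rename τ y = renameEquiv ℂ τ y := rfl
  rw [← MulEquiv.prime_iff (renameEquiv ℂ τ).toRingEquiv.toMulEquiv]
  exact heq ▸ hprime

/-- the linear map `w ↦ (y₁w, y₂w, -x₁w, -x₂w)` -/
noncomputable def Lmap (x₁ x₂ y₁ y₂ : R3) : R3 →ₗ[ℂ] R3 × R3 × R3 × R3 where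
  toFun w := (y₁ * w, y₂ * w, -(x₁ * w), -(x₂ * w))
  map_add' a b := by
    simp only [mul_add, Prod.mk_add_mk, neg_add]
  map_smul' c a := by
    simp only [Algebra.mul_smul_comm, RingHom.id_apply, Prod.smul_mk, smul_neg]

lemma not_dvd_both {x₁ x₂ y : R3} (hx₁ : x₁.IsHomogeneous 1) (hx₂ : x₂.IsHomogeneous 1)
    (hy : y.IsHomogeneous 1) (hy0 : y ≠ 0) (hxI : LinearIndependent ℂ ![x₁, x₂]) :
    ¬ (y ∣ x₁ ∧ y ∣ x₂) := by
  rintro ⟨⟨a, ha⟩, ⟨b, hb⟩⟩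
  have hx₁0 : x₁ ≠ 0 := hxI.ne_zero 0
  have hx₂0 : x₂ ≠ 0 := hxI.ne_zero 1
  have ha0 : a.IsHomogeneous 0 :=
    isHomogeneous_of_mul_left hy hy0 (by rw [← ha]; simpa using hx₁)
  have hb0 : b.IsHomogeneous 0 :=
    isHomogeneous_of_mul_left hy hy0 (by rw [← hb]; simpa using hx₂)
  have haC : a = C (coeff 0 a) := eq_C_of_homog0 ha0
  have hbC : b = C (coeff 0 b) := eq_C_of_homog0 hb0
  have hcane : coeff 0 a ≠ 0 := fun h => hx₁0 (by rw [ha, haC, h, map_zero, mul_zero])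
  have hrel : (coeff 0 b) • x₁ + (-(coeff 0 a)) • x₂ = 0 := by
    rw [ha, hb, haC, hbC]
    rw [smul_eq_C_mul, smul_eq_C_mul, map_neg]
    simp only [coeff_zero_C]
    ring
  have := Fintype.linearIndependent_iff.mp hxI ![coeff 0 b, -(coeff 0 a)] (by
    simpa [Fin.sum_univ_two] using hrel) 1
  simp at this
  exact hcane this
  
lemma mem_solset_iff (x₁ x₂ y₁ y₂ : R3)
    (hx₁ : x₁.IsHomogeneous 1) (hx₂ : x₂.IsHomogeneous 1)
    (hy₁ : y₁.IsHomogeneous 1) (hy₂ : y₂.IsHomogeneous 1)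
    (hxI : LinearIndependent ℂ ![x₁, x₂]) (hyI : LinearIndependent ℂ ![y₁, y₂]) :
    SolSet x₁ x₂ y₁ y₂
      = {p : R3 × R3 × R3 × R3 |
          ∃ w : R3, w.IsHomogeneous 2 ∧ p = (y₁ * w, y₂ * w, -(x₁ * w), -(x₂ * w))} := by
  have hx₁0 : x₁ ≠ 0 := hxI.ne_zero 0
  have hx₂0 : x₂ ≠ 0 := hxI.ne_zero 1
  have hy₁0 : y₁ ≠ 0 := hyI.ne_zero 0
  have hy₂0 : y₂ ≠ 0 := hyI.ne_zero 1
  ext ⟨v₁, v₂, u₁, u₂⟩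
  constructor
  · rintro ⟨hv₁, hv₂, hu₁, hu₂, E11, E12, E21, E22⟩
    simp only [Set.mem_setOf_eq]
    -- y₁ divides v₁
    have hdvd : y₁ ∣ v₁ := by
      have hprime := prime_linear hy₁ hy₁0
      by_cases h : y₁ ∣ x₁
      · have h2 : ¬ y₁ ∣ x₂ := fun h2 => not_dvd_both hx₁ hx₂ hy₁ hy₁0 hxI ⟨h, h2⟩
        have : y₁ ∣ v₁ * x₂ := ⟨-u₂, by linear_combination E12⟩
        rcases hprime.2.2 _ _ this with h' | h'
        · exact h'
        · exact absurd h' h2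
      · have : y₁ ∣ v₁ * x₁ := ⟨-u₁, by linear_combination E11⟩
        rcases hprime.2.2 _ _ this with h' | h'
        · exact h'
        · exact absurd h' h
    obtain ⟨w, hw⟩ := hdvd
    refine ⟨w, ?_, ?_⟩
    · exact isHomogeneous_of_mul_left hy₁ hy₁0 (by rw [← hw]; simpa using hv₁)
    -- components
    have hu₁' : u₁ = -(x₁ * w) := by
      have : y₁ * (u₁ + x₁ * w) = 0 := by rw [hw] at E11; linear_combination E11
      rcases mul_eq_zero.mp this with h | h
      · exact absurd h hy₁0
      · linear_combination h
    have hu₂' : u₂ = -(x₂ * w) := by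
      have : y₁ * (u₂ + x₂ * w) = 0 := by rw [hw] at E12; linear_combination E12
      rcases mul_eq_zero.mp this with h | h
      · exact absurd h hy₁0
      · linear_combination h
    have hv₂' : v₂ = y₂ * w := by
      have : (v₂ - y₂ * w) * x₁ = 0 := by rw [hu₁'] at E21; linear_combination E21
      rcases mul_eq_zero.mp this with h | h
      · linear_combination h
      · exact absurd h hx₁0
    exact Prod.ext hw (Prod.ext hv₂' (Prod.ext hu₁' hu₂'))
  · rintro ⟨w, hw, heq⟩
    rw [heq]
    refine ⟨by exact hy₁.mul hw, by exact hy₂.mul hw, by exact (hx₁.mul hw).neg,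
      by exact (hx₂.mul hw).neg, by ring, by ring, by ring, by ring⟩

/-- Let `x₁, x₂` be linearly independent linear forms and `y₁, y₂` linearly independent
linear forms in `ℂ[X,Y,Z]`.  The set of quadruples `(v₁,v₂,u₁,u₂)` of cubic forms with
`vᵢ·xⱼ + yᵢ·uⱼ = 0` for all `i,j` is exactly
`{(y₁·w, y₂·w, −x₁·w, −x₂·w) : w quadratic}`; in particular it is a `ℂ`-vector space
of dimension 6. -/
theorem stmt15 (x₁ x₂ y₁ y₂ : R3)
    (hx₁ : x₁.IsHomogeneous 1) (hx₂ : x₂.IsHomogeneous 1)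
    (hy₁ : y₁.IsHomogeneous 1) (hy₂ : y₂.IsHomogeneous 1)
    (hxI : LinearIndependent ℂ ![x₁, x₂]) (hyI : LinearIndependent ℂ ![y₁, y₂]) :
    SolSet x₁ x₂ y₁ y₂
      = {p : R3 × R3 × R3 × R3 |
          ∃ w : R3, w.IsHomogeneous 2 ∧ p = (y₁ * w, y₂ * w, -(x₁ * w), -(x₂ * w))} ∧
    ∃ bas : Fin 6 → R3 × R3 × R3 × R3,
      LinearIndependent ℂ bas ∧ (∀ k, bas k ∈ SolSet x₁ x₂ y₁ y₂) ∧
      ∀ p ∈ SolSet x₁ x₂ y₁ y₂, p ∈ Submodule.span ℂ (Set.range bas) := by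
  have hy₁0 : y₁ ≠ 0 := hyI.ne_zero 0
  have hsets := mem_solset_iff x₁ x₂ y₁ y₂ hx₁ hx₂ hy₁ hy₂ hxI hyI
  refine ⟨hsets, ?_⟩
  set L := Lmap x₁ x₂ y₁ y₂ with hL
  set mono : Fin 6 → R3 := fun k => monomial (e6 k) 1 with hmono
  refine ⟨fun k => L (mono k), ?_, ?_, ?_⟩
  · -- linear independence
    have hker : LinearMap.ker L = ⊥ := by
      rw [LinearMap.ker_eq_bot']
      intro w hw
      have : y₁ * w = 0 := congrArg Prod.fst hw
      rcases mul_eq_zero.mp this with h | h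
      · exact absurd h hy₁0
      · exact h
    have hli : LinearIndependent ℂ mono := by
      have h := (basisMonomials (Fin 3) ℂ).linearIndependent.comp e6 e6_inj
      have : (fun k => basisMonomials (Fin 3) ℂ (e6 k)) = mono := by
        funext k
        rw [hmono, coe_basisMonomials]
      rwa [Function.comp_def, this] at h
    exact hli.map' L hker
  · -- membership
    intro k
    rw [hsets]
    have hdeg : (e6 k).degree = 2 := by
      rw [fin3_degree]
      fin_cases k <;> simp [e6, Finsupp.single_apply]
    exact ⟨mono k, isHomogeneous_monomial 1 hdeg, rfl⟩
  · -- spanning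
    intro p hp
    rw [hsets] at hp
    obtain ⟨w, hw, rfl⟩ := hp
    have hwmem : w ∈ Submodule.span ℂ (Set.range mono) := by
      rw [MvPolynomial.as_sum w]
      apply Submodule.sum_mem
      intro d hd
      have hdd := homog_deg_sum hw (mem_support_iff.mp hd)
      obtain ⟨k, rfl⟩ := fin3_deg2 hdd
      have : monomial (e6 k) (coeff (e6 k) w) = (coeff (e6 k) w) • mono k := by
        rw [hmono, smul_monomial, smul_eq_mul, mul_one]
      rw [this]
      exact Submodule.smul_mem _ _ (Submodule.subset_span ⟨k, rfl⟩)
    have : L w ∈ Submodule.map L (Submodule.span ℂ (Set.range mono)) := ⟨w, hwmem, rfl⟩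
    rw [Submodule.map_span, ← Set.range_comp] at this
    exact this
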